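/- Let A be a ring and let C and C' each be an isomorphism-closed class of finite-length A-modules containing the zero module that is (i) extension-closed (if N ≤ M with N in the class and M/N in the class, then M is in the class) and (ii) closed under kernels and images of homomorphisms between its members. If C and C' contain exactly the same bricks, then C = C'. (An exact abelian extension-closed subcategory of A-mod is determined by the bricks it contains.) -/

import Mathlib

universe u

/-- A brick is a nonzero module all of whose nonzero endomorphisms are invertible
(equivalently, its endomorphism ring is a division ring). -/
def IsBrick {A : Type u} [Ring A] (M : ModuleCat.{u} A) : Prop :=
  Nontrivial M ∧ ∀ α : M →ₗ[A] M, α ≠ 0 → Function.Bijective α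

/-- A linear equivalence between two subsingleton modules. -/
def punitEquivOfSubsingleton {A : Type u} [Ring A] (X : Type u) [AddCommGroup X]
    [Module A X] [Subsingleton X] : PUnit.{u+1} ≃ₗ[A] X where
  toFun _ := 0
  invFun _ := PUnit.unit
  map_add' _ _ := (add_zero 0).symm
  map_smul' a _ := (smul_zero a).symm
  left_inv _ := rfl
  right_inv _ := Subsingleton.elim _ _

/-- Key one-directional lemma: under the closure hypotheses, membership in `C`
implies membership in `C'`. -/
theorem mem_of_mem_of_bricks {A : Type u} [Ring A] (C C' : ModuleCat.{u} A → Prop)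
    (hfl : ∀ M : ModuleCat.{u} A, C M → IsFiniteLength A M)
    (hiso : ∀ M M' : ModuleCat.{u} A, C M → (M ≃ₗ[A] M') → C M')
    (hiso' : ∀ M M' : ModuleCat.{u} A, C' M → (M ≃ₗ[A] M') → C' M')
    (hzero : C (ModuleCat.of A PUnit))
    (hzero' : C' (ModuleCat.of A PUnit))
    (hext' : ∀ M : ModuleCat.{u} A, IsFiniteLength A M → ∀ N : Submodule A M,
      C' (ModuleCat.of A N) → C' (ModuleCat.of A (M ⧸ N)) → C' M)
    (hker : ∀ M M' : ModuleCat.{u} A, C M → C M' → ∀ f : M →ₗ[A] M',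
      C (ModuleCat.of A (LinearMap.ker f)) ∧ C (ModuleCat.of A (LinearMap.range f)))
    (hbricks : ∀ M : ModuleCat.{u} A, IsBrick M → (C M → C' M)) :
    ∀ M : ModuleCat.{u} A, C M → C' M := by
  intro M hM
  have hflM := hfl M hM
  obtain ⟨hNoeth, hArt⟩ := isFiniteLength_iff_isNoetherian_isArtinian.mp hflM
  -- induct over submodules of M
  have main : ∀ N : Submodule A M, C (ModuleCat.of A N) → C' (ModuleCat.of A N) := by
    intro N
    induction N using WellFoundedLT.induction with
    | ind N IH =>
      intro hN
      rcases subsingleton_or_nontrivial N with hs | hnt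
      · exact hiso' (ModuleCat.of A PUnit) (ModuleCat.of A N) hzero'
          (punitEquivOfSubsingleton (N : Type u))
      · -- X := ↥N is a nontrivial module in C
        have hNnoeth : IsNoetherian A N := inferInstance
        have hNart : IsArtinian A N := inferInstance
        have hflN : IsFiniteLength A N :=
          isFiniteLength_iff_isNoetherian_isArtinian.mpr ⟨hNnoeth, hNart⟩
        -- The family of "good" proper submodules of N
        set F : Set (Submodule A (N : Type u)) :=
          {K | K ≠ ⊤ ∧ C (ModuleCat.of A K) ∧ C (ModuleCat.of A ((N : Type u) ⧸ K))} with hF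
        have hbotF : (⊥ : Submodule A (N : Type u)) ∈ F := by
          refine ⟨bot_ne_top, ?_, ?_⟩
          · exact hiso (ModuleCat.of A PUnit) _ hzero
              (punitEquivOfSubsingleton (⊥ : Submodule A (N : Type u)))
          · exact hiso (ModuleCat.of A N) _ hN
              (Submodule.quotEquivOfEqBot (⊥ : Submodule A (N : Type u)) rfl).symm
        -- choose a maximal element of F
        obtain ⟨K, hKF, hKmax⟩ :=
          (IsWellFounded.wf : WellFounded ((· > ·) : Submodule A (N : Type u) →
            Submodule A (N : Type u) → Prop)).has_min F ⟨_, hbotF⟩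
        obtain ⟨hKne, hKC, hQC⟩ := hKF
        have hKlt : K < ⊤ := lt_top_iff_ne_top.mpr hKne
        have hQnt : Nontrivial ((N : Type u) ⧸ K) := Submodule.Quotient.nontrivial_iff.mpr hKlt.ne
        -- N ⧸ K is a brick
        have hbrick : IsBrick (ModuleCat.of A ((N : Type u) ⧸ K)) := by
          refine ⟨hQnt, ?_⟩
          intro α hα
          set f : (N : Type u) →ₗ[A] ((N : Type u) ⧸ K) := α ∘ₗ K.mkQ with hf
          have hfne : f ≠ 0 := by
            intro h0
            apply hα
            refine LinearMap.ext fun q => ?_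
            obtain ⟨m, rfl⟩ := K.mkQ_surjective q
            have : f m = 0 := by rw [h0]; rfl
            simpa [hf] using this
          have hkf := hker (ModuleCat.of A N) (ModuleCat.of A ((N : Type u) ⧸ K)) hN hQC f
          have hkerF : LinearMap.ker f ∈ F := by
            refine ⟨fun h => hfne (LinearMap.ker_eq_top.mp h), hkf.1, ?_⟩
            exact hiso (ModuleCat.of A (LinearMap.range f)) _ hkf.2
              f.quotKerEquivRange.symm
          have hle : K ≤ LinearMap.ker f := by
            have := LinearMap.ker_le_ker_comp K.mkQ α
            rwa [Submodule.ker_mkQ] at this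
          have hKeq : K = LinearMap.ker f := by
            by_contra hne
            exact hKmax _ hkerF (lt_of_le_of_ne hle hne)
          -- hence α is injective
          have hkerα : LinearMap.ker α = ⊥ := by
            have h1 : LinearMap.ker f = Submodule.comap K.mkQ (LinearMap.ker α) :=
              LinearMap.ker_comp _ _
            have h2 : Submodule.comap K.mkQ (LinearMap.ker α) =
                Submodule.comap K.mkQ ⊥ := by
              rw [← h1, ← hKeq, Submodule.comap_bot, Submodule.ker_mkQ]
            exact Submodule.comap_injective_of_surjective K.mkQ_surjective h2
          have hinj : Function.Injective α := LinearMap.ker_eq_bot.mp hkerα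
          exact ⟨hinj, IsArtinian.surjective_of_injective_endomorphism
            (M := (N : Type u) ⧸ K) α hinj⟩
        have hQC' : C' (ModuleCat.of A ((N : Type u) ⧸ K)) :=
          hbricks _ hbrick hQC
        -- transfer K to a submodule of M and use the inductive hypothesis
        set K' : Submodule A M := K.map N.subtype with hK'
        have e : (K : Type u) ≃ₗ[A] (K' : Type u) :=
          Submodule.equivMapOfInjective N.subtype N.injective_subtype K
        have hK'lt : K' < N := by
          have := Submodule.map_strictMono_of_injective N.injective_subtype hKlt
          rwa [Submodule.map_subtype_top] at this
        have hK'C : C (ModuleCat.of A K') := hiso (ModuleCat.of A K) _ hKC e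
        have hK'C' : C' (ModuleCat.of A K') := IH K' hK'lt hK'C
        have hKC' : C' (ModuleCat.of A K) :=
          hiso' (ModuleCat.of A K') _ hK'C' e.symm
        exact hext' (ModuleCat.of A N) hflN K hKC' hQC'
  have h1 : C (ModuleCat.of A (⊤ : Submodule A M)) :=
    hiso M _ hM Submodule.topEquiv.symm
  exact hiso' (ModuleCat.of A (⊤ : Submodule A M)) M (main ⊤ h1) Submodule.topEquiv

/-- An exact abelian extension-closed subcategory of finite-length modules is
determined by the bricks it contains: if `C` and `C'` are isomorphism-closed classes
of finite-length modules containing the zero module, closed under extensions, and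
closed under kernels and images of homomorphisms between their members, and if they
contain exactly the same bricks, then `C = C'`. -/
theorem eq_of_same_bricks {A : Type u} [Ring A] (C C' : ModuleCat.{u} A → Prop)
    (hfl : ∀ M : ModuleCat.{u} A, C M → IsFiniteLength A M)
    (hfl' : ∀ M : ModuleCat.{u} A, C' M → IsFiniteLength A M)
    (hiso : ∀ M M' : ModuleCat.{u} A, C M → (M ≃ₗ[A] M') → C M')
    (hiso' : ∀ M M' : ModuleCat.{u} A, C' M → (M ≃ₗ[A] M') → C' M')
    (hzero : C (ModuleCat.of A PUnit))
    (hzero' : C' (ModuleCat.of A PUnit))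
    (hext : ∀ M : ModuleCat.{u} A, IsFiniteLength A M → ∀ N : Submodule A M,
      C (ModuleCat.of A N) → C (ModuleCat.of A (M ⧸ N)) → C M)
    (hext' : ∀ M : ModuleCat.{u} A, IsFiniteLength A M → ∀ N : Submodule A M,
      C' (ModuleCat.of A N) → C' (ModuleCat.of A (M ⧸ N)) → C' M)
    (hker : ∀ M M' : ModuleCat.{u} A, C M → C M' → ∀ f : M →ₗ[A] M',
      C (ModuleCat.of A (LinearMap.ker f)) ∧ C (ModuleCat.of A (LinearMap.range f)))
    (hker' : ∀ M M' : ModuleCat.{u} A, C' M → C' M' → ∀ f : M →ₗ[A] M',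
      C' (ModuleCat.of A (LinearMap.ker f)) ∧ C' (ModuleCat.of A (LinearMap.range f)))
    (hbricks : ∀ M : ModuleCat.{u} A, IsBrick M → (C M ↔ C' M)) :
    ∀ M : ModuleCat.{u} A, C M ↔ C' M := by
  intro M
  constructor
  · exact fun h => mem_of_mem_of_bricks C C' hfl hiso hiso' hzero hzero' hext' hker
      (fun M hb => (hbricks M hb).mp) M h
  · exact fun h => mem_of_mem_of_bricks C' C hfl' hiso' hiso hzero' hzero hext hker'
      (fun M hb => (hbricks M hb).mpr) M h
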